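/- Let G be a group of nilpotency class at most two, i.e., ⁅g,h⁆ ∈ Z(G) for all g, h ∈ G, so that the identity endomorphism of G is commutator-central. Let ψ : G → G be any commutator-central endomorphism and β ∈ 𝓔. Let ψ·β ∈ 𝓔 denote the image of β under the group homomorphism 𝓔 → 𝓔 induced (via FreeGroup.map) by φ ↦ ψ ∘ φ on endomorphisms. Then g ∘_{ψ,β} h = g ∘_{id,ψ·β} h for all g, h ∈ G; in particular, the brace block arising from ψ is contained in the brace block arising from the identity map. -/

import Mathlib

/-- Evaluation of an element of the free group `𝓔 = FreeGroup (Monoid.End G)`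
at an element `g : G`: the image of `α` under the homomorphism `𝓔 → G`
given by `FreeGroup.lift (fun φ => φ g)`. -/
def evalE {G : Type*} [Group G] (α : FreeGroup (Monoid.End G)) (g : G) : G :=
  FreeGroup.lift (fun φ : Monoid.End G => φ g) α

/-- The binary operation `g ∘_{ψ,α} h = g · ψ_α(g) · h · ψ_α(g)⁻¹`, where
`ψ_α(g) = ψ (α(g))`. -/
def op {G : Type*} [Group G] (ψ : Monoid.End G) (α : FreeGroup (Monoid.End G)) (g h : G) : G :=
  g * ψ (evalE α g) * h * (ψ (evalE α g))⁻¹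

open scoped commutatorElement

/-- if `G` has nilpotency class at most two (all commutators are
central, so the identity endomorphism `1 : Monoid.End G` is commutator-central),
then for any commutator-central `ψ` and `β ∈ 𝓔` we have
`∘_{ψ,β} = ∘_{id, ψ·β}`, where `ψ·β = FreeGroup.map (ψ * ·) β`; hence the brace
block arising from `ψ` is contained in the one arising from the identity. -/
theorem op_psi_eq_op_id {G : Type*} [Group G]
    (hG : ∀ g h : G, ⁅g, h⁆ ∈ Subgroup.center G)
    (ψ : Monoid.End G) (hψ : ∀ g h : G, ψ ⁅g, h⁆ ∈ Subgroup.center G)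
    (β : FreeGroup (Monoid.End G)) (g h : G) :
    op ψ β g h =
      op (1 : Monoid.End G) (FreeGroup.map (fun φ : Monoid.End G => ψ * φ) β) g h := by
  have key : evalE (FreeGroup.map (fun φ : Monoid.End G => ψ * φ) β) g = ψ (evalE β g) := by
    induction β using FreeGroup.induction_on with
    | C1 => simp [evalE]
    | of x =>
        show evalE (FreeGroup.map _ (FreeGroup.of x)) g = ψ (evalE (FreeGroup.of x) g)
        simp only [evalE, FreeGroup.map.of, FreeGroup.lift_apply_of]
        rfl
    | inv_of x ih => simp [evalE] at ih ⊢
    | mul x y ihx ihy => simp [evalE] at ihx ihy ⊢; rw [ihx, ihy]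
  simp only [op, key]
  rfl
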